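/- Let Y be a noetherian k-scheme and R a k-algebra with nilradical Nil(R), and let R_nil = k + Nil(R). Then there is a canonical isomorphism of abelian groups Inf(Div_Y)(R) ≅ Γ(Y, K_Y/O_Y) ⊗_k Nil(R), where Inf(Div_Y)(R) is the kernel of Div_Y(R_nil) → Div_Y(k) induced by the augmentation R_nil → k. In particular Lie(Div_Y) ≅ Γ(Y, K_Y/O_Y). -/

import Mathlib

set_option synthInstance.maxHeartbeats 1000000
set_option maxHeartbeats 1000000

/- STATEMENT 11: Inf(Div_Y)(R) ≅ Γ(Y, K_Y/O_Y) ⊗_k Nil(R), and in particular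
Lie(Div_Y) ≅ Γ(Y, K_Y/O_Y).  The functor of relative Cartier divisors is
Div_Y(R') = Γ(Y ⊗ R', K^*/O^*); over the subring R_nil = k + Nil(R) the
relative total quotient ring is K_Y[Nil(R)], so (in the ring-theoretic model
below, with A the coordinate ring, K its total quotient ring, and R a
k-algebra equal to k + Nil(R), encoded by the augmentation ρ with nilpotent
kernel) Div(R_nil) = (K ⊗ R)^*/(A ⊗ R)^*, Div(k) = K^*/A^*, and the kernel
Inf of the augmentation map between them is (K/A) ⊗_k Nil(R). -/

set_option linter.unusedSectionVars false

open Finset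

section Texp
variable (k : Type*) [Field k] [CharZero k]
variable {S : Type*} [CommRing S] [Algebra k S]

noncomputable def texp (m : ℕ) (a : S) : S :=
  ∑ i ∈ Finset.range m, (((i.factorial : k))⁻¹) • a ^ i

lemma texp_eq_of_pow_eq_zero {a : S} {m M : ℕ} (h : a ^ m = 0) (hm : m ≤ M) :
    texp k M a = texp k m a := by
  unfold texp
  rw [← Finset.sum_range_add_sum_Ico _ hm, add_eq_left]
  refine Finset.sum_eq_zero fun i hi => ?_
  rw [mem_Ico] at hi
  have : a ^ i = 0 := by
    have : a ^ i = a ^ m * a ^ (i - m) := by rw [← pow_add]; congr 1; omega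
    rw [this, h, zero_mul]
  rw [this, smul_zero]

lemma texp_eq_texp {a : S} {m m' : ℕ} (h : a ^ m = 0) (h' : a ^ m' = 0) :
    texp k m a = texp k m' a := by
  rw [← texp_eq_of_pow_eq_zero k h (le_max_left m m'),
      ← texp_eq_of_pow_eq_zero k h' (le_max_right m m')]
set_option linter.unusedSectionVars false

lemma coeff_eq {i j : ℕ} :
    (((i + j).factorial : k))⁻¹ * ((i + j).choose i : k) =
      ((i.factorial : k))⁻¹ * ((j.factorial : k))⁻¹ := by
  have h := Nat.choose_mul_factorial_mul_factorial (Nat.le_add_right i j)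
  have h2 : (i + j - i) = j := by omega
  rw [h2] at h
  have hcast : ((i + j).choose i : k) * (i.factorial : k) * (j.factorial : k)
      = ((i + j).factorial : k) := by exact_mod_cast congrArg (Nat.cast : ℕ → k) h
  have hi : (i.factorial : k) ≠ 0 := Nat.cast_ne_zero.2 i.factorial_ne_zero
  have hj : (j.factorial : k) ≠ 0 := Nat.cast_ne_zero.2 j.factorial_ne_zero
  have hij : (((i+j).factorial : k)) ≠ 0 := Nat.cast_ne_zero.2 (i+j).factorial_ne_zero
  field_simp
  linear_combination hcast

lemma texp_add {a b : S} {m m' : ℕ} (h : a ^ m = 0) (h' : b ^ m' = 0) :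
    texp k (m + m') (a + b) = texp k (m + m') a * texp k (m + m') b := by
  set M := m + m' with hM
  have key : ∀ p : ℕ × ℕ, M ≤ p.1 + p.2 →
      (((p.1.factorial : k))⁻¹ * ((p.2.factorial : k))⁻¹) • (a ^ p.1 * b ^ p.2) = 0 := by
    rintro ⟨i, j⟩ hij
    rcases le_or_gt m i with hi | hi
    · have : a ^ i = 0 := by
        have : a ^ i = a ^ m * a ^ (i - m) := by rw [← pow_add]; congr 1; omega
        rw [this, h, zero_mul]
      simp [this]
    · have hj : m' ≤ j := by omega
      have : b ^ j = 0 := by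
        have : b ^ j = b ^ m' * b ^ (j - m') := by rw [← pow_add]; congr 1; omega
        rw [this, h', zero_mul]
      simp [this]
  -- RHS as a sum over the product
  have hrhs : texp k M a * texp k M b =
      ∑ p ∈ Finset.range M ×ˢ Finset.range M,
        (((p.1.factorial : k))⁻¹ * ((p.2.factorial : k))⁻¹) • (a ^ p.1 * b ^ p.2) := by
    rw [texp, texp, Finset.sum_mul_sum, Finset.sum_product]
    refine Finset.sum_congr rfl fun i _ => Finset.sum_congr rfl fun j _ => ?_
    rw [smul_mul_smul_comm, mul_smul]
  -- LHS as a sum over the "triangle"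
  have hlhs : texp k M (a + b) =
      ∑ p ∈ (Finset.range M).biUnion (fun n => Finset.HasAntidiagonal.antidiagonal n),
        (((p.1.factorial : k))⁻¹ * ((p.2.factorial : k))⁻¹) • (a ^ p.1 * b ^ p.2) := by
    rw [texp, Finset.sum_biUnion]
    · refine Finset.sum_congr rfl fun n _ => ?_
      rw [add_pow, Finset.smul_sum, Finset.Nat.sum_antidiagonal_eq_sum_range_succ_mk]
      refine Finset.sum_congr rfl fun i hi => ?_
      rw [Finset.mem_range] at hi
      have hin : i ≤ n := by omega
      have hn : n = i + (n - i) := by omega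
      have hc : a ^ i * b ^ (n - i) * (n.choose i : S) =
          ((n.choose i : k)) • (a ^ i * b ^ (n - i)) := by
        rw [Nat.cast_smul_eq_nsmul, nsmul_eq_mul, mul_comm]
      rw [hc, smul_smul]
      congr 1
      conv_lhs => rw [hn]
      exact coeff_eq k
    · intro x _ y _ hxy
      simp only [Finset.disjoint_left]
      intro p hp hp'
      rw [Finset.HasAntidiagonal.mem_antidiagonal] at hp hp'
      exact hxy (hp ▸ hp')
  rw [hlhs, hrhs]
  refine Finset.sum_subset ?_ ?_
  · intro p hp
    simp only [Finset.mem_biUnion, Finset.HasAntidiagonal.mem_antidiagonal, Finset.mem_range] at hp ⊢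
    obtain ⟨n, hn, hpn⟩ := hp
    rw [Finset.mem_product, Finset.mem_range, Finset.mem_range]
    omega
  · intro p hp hp'
    refine key p ?_
    by_contra hlt
    push_neg at hlt
    apply hp'
    simp only [Finset.mem_biUnion, Finset.HasAntidiagonal.mem_antidiagonal, Finset.mem_range]
    exact ⟨p.1 + p.2, hlt, rfl⟩

open scoped Classical in
noncomputable def nexp (a : S) : S :=
  if h : IsNilpotent a then texp k h.choose a else 1

lemma nexp_eq {a : S} {m : ℕ} (h : a ^ m = 0) : nexp k a = texp k m a := by
  have hn : IsNilpotent a := ⟨m, h⟩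
  rw [nexp, dif_pos hn]
  exact texp_eq_texp k hn.choose_spec h

lemma nexp_zero : nexp k (0 : S) = 1 := by
  rw [nexp_eq k (m := 1) (by simp), texp]
  simp

lemma pow_add_pow_eq_zero {a b : S} {m m' : ℕ} (h : a ^ m = 0) (h' : b ^ m' = 0) :
    (a + b) ^ (m + m') = 0 := by
  rw [add_pow]
  refine Finset.sum_eq_zero fun i hi => ?_
  rw [Finset.mem_range] at hi
  rcases le_or_gt m i with hmi | hmi
  · have : a ^ i = 0 := by
      have : a ^ i = a ^ m * a ^ (i - m) := by rw [← pow_add]; congr 1; omega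
      rw [this, h, zero_mul]
    simp [this]
  · have : b ^ (m + m' - i) = 0 := by
      have : b ^ (m + m' - i) = b ^ m' * b ^ (m + m' - i - m') := by
        rw [← pow_add]; congr 1; omega
      rw [this, h', zero_mul]
    simp [this]

lemma nexp_add {a b : S} (ha : IsNilpotent a) (hb : IsNilpotent b) :
    nexp k (a + b) = nexp k a * nexp k b := by
  obtain ⟨m, hm⟩ := ha
  obtain ⟨m', hm'⟩ := hb
  have hM : (a + b) ^ (m + m') = 0 := pow_add_pow_eq_zero hm hm'
  have haM : a ^ (m + m') = 0 := by rw [pow_add, hm, zero_mul]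
  have hbM : b ^ (m + m') = 0 := by rw [pow_add, hm', mul_zero]
  rw [nexp_eq k hM, nexp_eq k haM, nexp_eq k hbM, texp_add k hm hm']

lemma nexp_mul_nexp_neg {a : S} (ha : IsNilpotent a) : nexp k a * nexp k (-a) = 1 := by
  rw [← nexp_add k ha ha.neg, add_neg_cancel, nexp_zero]

lemma texp_decomp {x : S} {M : ℕ} (hM : 2 ≤ M) :
    ∃ s : S, texp k M x = 1 + x + x ^ 2 * s := by
  obtain ⟨M'', rfl⟩ : ∃ M'', M = M'' + 2 := ⟨M - 2, by omega⟩
  refine ⟨∑ i ∈ Finset.range M'', (((i + 2).factorial : k))⁻¹ • x ^ i, ?_⟩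
  rw [texp, Finset.sum_range_succ', Finset.sum_range_succ']
  simp only [pow_zero, Nat.factorial_zero, Nat.cast_one, inv_one, one_smul, pow_one,
    Nat.factorial_one]
  rw [Finset.mul_sum]
  have : ∀ i ∈ Finset.range M'',
      (((i + 1 + 1).factorial : k))⁻¹ • x ^ (i + 1 + 1) =
        x ^ 2 * (((i + 2).factorial : k))⁻¹ • x ^ i := by
    intro i _
    rw [mul_smul_comm]
    congr 1
    rw [← pow_add]
    ring_nf
  rw [Finset.sum_congr rfl this, ← Finset.mul_sum,
    show (((Nat.factorial (0+1) : ℕ) : k))⁻¹ • x ^ (0+1) = x by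
      norm_num]
  ring

lemma isUnit_one_add_of_nilpotent {n : S} (hn : IsNilpotent n) : IsUnit (1 + n) := by
  obtain ⟨m, hm⟩ := hn
  refine IsUnit.of_mul_eq_one (∑ i ∈ Finset.range m, (-n) ^ i) ?_
  have := geom_sum_mul (-n) m
  have h1 : (-n) ^ m = 0 := by rw [neg_pow, hm, mul_zero]
  rw [h1] at this
  have : (∑ i ∈ Finset.range m, (-n) ^ i) * (-n - 1) = -1 := by rw [this]; ring
  calc (1 + n) * ∑ i ∈ Finset.range m, (-n) ^ i
      = -((∑ i ∈ Finset.range m, (-n) ^ i) * (-n - 1)) := by ring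
    _ = 1 := by rw [this]; ring

lemma nexp_eq_one {x : S} (hx : IsNilpotent x) (h : nexp k x = 1) : x = 0 := by
  obtain ⟨m, hm⟩ := hx
  have hM : x ^ (m + 2) = 0 := by rw [pow_add, hm, zero_mul]
  obtain ⟨s, hs⟩ := texp_decomp k (x := x) (M := m + 2) (by omega)
  rw [nexp_eq k hM, hs] at h
  have hxs : x * (1 + x * s) = 0 := by linear_combination h
  have hu : IsUnit (1 + x * s) := isUnit_one_add_of_nilpotent (⟨m, by
    rw [mul_pow, hm, zero_mul]⟩)
  exact hu.mul_left_cancel (by rw [mul_comm, hxs, mul_zero])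

lemma nexp_inj {a b : S} (ha : IsNilpotent a) (hb : IsNilpotent b)
    (h : nexp k a = nexp k b) : a = b := by
  have h1 : nexp k (a + -b) = 1 := by
    rw [nexp_add k ha hb.neg, h, ← nexp_add k hb hb.neg, add_neg_cancel, nexp_zero]
  have h2 : IsNilpotent (a + -b) := Commute.isNilpotent_add (Commute.all _ _) ha hb.neg
  have h3 := nexp_eq_one k h2 h1
  rw [← sub_eq_add_neg] at h3
  exact sub_eq_zero.mp h3

variable {S' : Type*} [CommRing S'] [Algebra k S']

lemma map_texp (f : S →ₐ[k] S') (m : ℕ) (a : S) : f (texp k m a) = texp k m (f a) := by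
  rw [texp, texp, map_sum]
  exact Finset.sum_congr rfl fun i _ => by rw [map_smul, map_pow]

lemma map_nexp (f : S →ₐ[k] S') {a : S} (ha : IsNilpotent a) :
    f (nexp k a) = nexp k (f a) := by
  obtain ⟨m, hm⟩ := ha
  rw [nexp_eq k hm, nexp_eq k (show (f a) ^ m = 0 by rw [← map_pow, hm, map_zero]),
    map_texp]

/-- surjectivity of exp onto 1 + nilpotents, with control of the ideal. -/
lemma exists_nexp_eq : ∀ (m : ℕ) (t : S), t ^ m = 0 →
    ∃ a ∈ Ideal.span {t}, nexp k a = 1 + t := by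
  intro m
  induction m using Nat.strong_induction_on with
  | _ m IH =>
    intro t ht
    match m, IH with
    | 0, _ =>
      refine ⟨0, Ideal.zero_mem _, ?_⟩
      rw [nexp_zero]
      have h0 : (1 : S) = 0 := by simpa using ht
      calc (1 : S) = 0 := h0
        _ = 0 + 0 := by ring
        _ = 1 + t := by
          congr 1
          · exact h0.symm
          · calc (0 : S) = 0 * t := by ring
              _ = 1 * t := by rw [← h0]
              _ = t := one_mul t
    | 1, _ =>
      refine ⟨0, Ideal.zero_mem _, ?_⟩
      rw [nexp_zero, pow_one] at *
      rw [ht, add_zero]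
    | (m + 2), IH =>
      have htn : IsNilpotent t := ⟨m + 2, ht⟩
      -- decompose nexp (-t)
      obtain ⟨mt, hmt⟩ := htn.neg
      have hmt2 : (-t) ^ (mt + 2) = 0 := by rw [pow_add, hmt, zero_mul]
      obtain ⟨s, hs⟩ := texp_decomp k (x := -t) (M := mt + 2) (by omega)
      have hnexpneg : nexp k (-t) = 1 - t + t ^ 2 * s := by
        rw [nexp_eq k hmt2, hs]; ring
      set c : S := s - 1 + t * s with hc
      have key : (1 + t) * nexp k (-t) = 1 + t ^ 2 * c := by
        rw [hnexpneg, hc]; ring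
      set t' : S := t ^ 2 * c with ht'
      have ht'pow : t' ^ ((m + 3) / 2) = 0 := by
        rw [ht', mul_pow, ← pow_mul]
        have : t ^ (2 * ((m + 3) / 2)) = 0 := by
          have h1 : t ^ (2 * ((m + 3) / 2)) = t ^ (m + 2) * t ^ (2 * ((m + 3) / 2) - (m + 2)) := by
            rw [← pow_add]; congr 1; omega
          rw [h1, ht, zero_mul]
        rw [this, zero_mul]
      obtain ⟨a', ha'mem, ha'⟩ := IH ((m + 3) / 2) (by omega) t' ht'pow
      refine ⟨t + a', ?_, ?_⟩
      · refine Ideal.add_mem _ (Ideal.subset_span rfl) ?_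
        have : Ideal.span {t'} ≤ Ideal.span {t} := by
          rw [Ideal.span_singleton_le_span_singleton]
          exact ⟨t * c, by rw [ht']; ring⟩
        exact this ha'mem
      · have ha'nil : IsNilpotent a' := by
          obtain ⟨d, hd⟩ := Ideal.mem_span_singleton'.mp ha'mem
          exact ⟨((m + 3) / 2), by rw [← hd, mul_pow, ht'pow, mul_zero]⟩
        rw [nexp_add k htn ha'nil, ha']
        -- nexp t * (1 + t') = nexp t * (1+t) * nexp (-t) = (1+t)
        calc nexp k t * (1 + t ^ 2 * c)
            = nexp k t * ((1 + t) * nexp k (-t)) := by rw [key]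
          _ = (1 + t) * (nexp k t * nexp k (-t)) := by ring
          _ = 1 + t := by rw [nexp_mul_nexp_neg k htn, mul_one]

open scoped Classical in
noncomputable def uexp (a : S) : Sˣ :=
  if h : IsNilpotent a then
    ⟨nexp k a, nexp k (-a),
      nexp_mul_nexp_neg k h,
      by rw [mul_comm]; exact nexp_mul_nexp_neg k h⟩
  else 1

lemma uexp_val {a : S} (h : IsNilpotent a) : ((uexp k a : Sˣ) : S) = nexp k a := by
  rw [uexp, dif_pos h]

lemma uexp_add {a b : S} (ha : IsNilpotent a) (hb : IsNilpotent b) :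
    uexp k (a + b) = uexp k a * uexp k b := by
  ext
  rw [Units.val_mul, uexp_val k ha, uexp_val k hb,
    uexp_val k (Commute.isNilpotent_add (Commute.all _ _) ha hb), nexp_add k ha hb]

lemma uexp_zero : uexp k (0 : S) = 1 := by
  ext
  rw [uexp_val k IsNilpotent.zero, nexp_zero, Units.val_one]

lemma map_uexp (f : S →ₐ[k] S') {a : S} (ha : IsNilpotent a) :
    Units.map (f : S →* S') (uexp k a) = uexp k (f a) := by
  ext
  rw [Units.coe_map, uexp_val k ha, uexp_val k (ha.map f)]
  exact map_nexp k f ha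

end Texp

open TensorProduct

theorem inf_div_iso_lieDiv_tensor_nil
    (k A K R : Type*) [Field k] [CharZero k]
    [CommRing A] [IsNoetherianRing A] [Algebra k A]
    [CommRing K] [Algebra k K] [Algebra A K] [IsScalarTower k A K]
    -- K is the total quotient ring of A
    (hK : IsLocalization (nonZeroDivisors A) K)
    [CommRing R] [Algebra k R]
    -- R is of the form k + Nil(R): the augmentation ρ has nilpotent "kernel"
    (ρ : R →ₐ[k] k) (hR : ∀ x : R, IsNilpotent (x - algebraMap k R (ρ x)))
    -- ι : A ⊗ R → K ⊗ R, ε : K ⊗ R → K the augmentation (via ρ)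
    (ι : (A ⊗[k] R) →ₐ[k] (K ⊗[k] R))
    (hι : ι = Algebra.TensorProduct.map (IsScalarTower.toAlgHom k A K)
      (AlgHom.id k R))
    (ε : (K ⊗[k] R) →ₐ[k] K)
    (hε : ε = (Algebra.TensorProduct.rid k k K).toAlgHom.comp
      (Algebra.TensorProduct.map (AlgHom.id k K) ρ)) :
    ∃ φ : ((K ⊗[k] R)ˣ ⧸ (Units.map (ι : (A ⊗[k] R) →* (K ⊗[k] R))).range) →*
        (Kˣ ⧸ (Units.map ((algebraMap A K : A →+* K) : A →* K)).range),
      (∀ u : (K ⊗[k] R)ˣ,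
        φ (QuotientGroup.mk u) =
          QuotientGroup.mk (Units.map (ε : (K ⊗[k] R) →* K) u)) ∧
      Nonempty (↥φ.ker ≃*
        Multiplicative
          ((K ⧸ LinearMap.range (IsScalarTower.toAlgHom k A K).toLinearMap)
            ⊗[k] ↥((nilradical R).restrictScalars k))) := by
  classical
  -- basic objects
  set V : Submodule k R := (nilradical R).restrictScalars k with hV
  have key0 : ∀ x : R, ρ x = 0 ↔ IsNilpotent x := by
    intro x
    constructor
    · intro h
      have := hR x
      rw [h, map_zero, sub_zero] at this
      exact this
    · intro h
      have h1 : IsNilpotent (ρ x) := h.map ρ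
      exact h1.eq_zero
  set g : A →ₗ[k] K := (IsScalarTower.toAlgHom k A K).toLinearMap with hg
  set p : Submodule k K := LinearMap.range g with hp
  set ρl : R →ₗ[k] k := ρ.toLinearMap with hρl
  set j : (K ⊗[k] ↥V) →ₗ[k] (K ⊗[k] R) := LinearMap.lTensor K V.subtype with hj
  set jA : (A ⊗[k] ↥V) →ₗ[k] (A ⊗[k] R) := LinearMap.lTensor A V.subtype with hjA
  set εA : (A ⊗[k] R) →ₐ[k] A :=
    (Algebra.TensorProduct.rid k k A).toAlgHom.comp
      (Algebra.TensorProduct.map (AlgHom.id k A) ρ) with hεA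
  -- ε in linear terms
  have hε' : ∀ t : K ⊗[k] R, ε t = TensorProduct.rid k K (LinearMap.lTensor K ρl t) := by
    intro t
    induction t using TensorProduct.induction_on with
    | zero => simp
    | tmul x r => simp [hε, hρl]
    | add x y hx hy => simp [map_add, hx, hy]
  have hεA' : ∀ t : A ⊗[k] R, εA t = TensorProduct.rid k A (LinearMap.lTensor A ρl t) := by
    intro t
    induction t using TensorProduct.induction_on with
    | zero => simp
    | tmul x r => simp [hεA, hρl]
    | add x y hx hy => simp [map_add, hx, hy]
  -- exactness of V → R → k
  have hexact : Function.Exact V.subtype ρl := by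
    intro y
    constructor
    · intro h
      exact ⟨⟨y, show y ∈ nilradical R from mem_nilradical.mpr ((key0 y).mp h)⟩, rfl⟩
    · rintro ⟨⟨z, hz⟩, rfl⟩
      exact (key0 z).mpr (mem_nilradical.mp hz)
  have hexactK := Module.Flat.lTensor_exact K hexact
  have hexactA := Module.Flat.lTensor_exact A hexact
  have hkerε : ∀ t : K ⊗[k] R, ε t = 0 ↔ t ∈ Set.range j := by
    intro t
    rw [hε']
    rw [show (TensorProduct.rid k K) ((LinearMap.lTensor K ρl) t) = 0 ↔
        (LinearMap.lTensor K ρl) t = 0 from EmbeddingLike.map_eq_zero_iff]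
    exact hexactK t
  have hkerεA : ∀ t : A ⊗[k] R, εA t = 0 ↔ t ∈ Set.range jA := by
    intro t
    rw [hεA']
    rw [show (TensorProduct.rid k A) ((LinearMap.lTensor A ρl) t) = 0 ↔
        (LinearMap.lTensor A ρl) t = 0 from EmbeddingLike.map_eq_zero_iff]
    exact hexactA t
  -- nilpotency of images of j
  have hjnil : ∀ w : K ⊗[k] ↥V, IsNilpotent (j w) := by
    intro w
    induction w using TensorProduct.induction_on with
    | zero => simpa using IsNilpotent.zero
    | tmul x n =>
      have hn : IsNilpotent (n : R) := mem_nilradical.mp n.2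
      obtain ⟨m, hm⟩ := hn
      exact ⟨m, by
        rw [hj, LinearMap.lTensor_tmul, Algebra.TensorProduct.tmul_pow]
        simp [hm]⟩
    | add x y hx hy =>
      rw [map_add]
      exact Commute.isNilpotent_add (Commute.all _ _) hx hy
  have hjAnil : ∀ w : A ⊗[k] ↥V, IsNilpotent (jA w) := by
    intro w
    induction w using TensorProduct.induction_on with
    | zero => simpa using IsNilpotent.zero
    | tmul x n =>
      have hn : IsNilpotent (n : R) := mem_nilradical.mp n.2
      obtain ⟨m, hm⟩ := hn
      exact ⟨m, by
        rw [hjA, LinearMap.lTensor_tmul, Algebra.TensorProduct.tmul_pow]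
        simp [hm]⟩
    | add x y hx hy =>
      rw [map_add]
      exact Commute.isNilpotent_add (Commute.all _ _) hx hy
  have hjinj : Function.Injective j :=
    Module.Flat.lTensor_preserves_injective_linearMap (M := K) V.subtype
      (Submodule.injective_subtype V)
  -- compatibility ε ∘ ι = algebraMap ∘ εA
  have hει : ∀ t : A ⊗[k] R, ε (ι t) = algebraMap A K (εA t) := by
    intro t
    induction t using TensorProduct.induction_on with
    | zero => simp
    | tmul a r =>
      rw [hι, hε, hεA]
      simp [Algebra.smul_def, ← IsScalarTower.algebraMap_apply, map_mul,
        ← IsScalarTower.algebraMap_apply k A K]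
    | add x y hx hy => simp [map_add, hx, hy]
  -- compatibility ι ∘ jA = j ∘ rTensor g
  have hιj : ∀ w : A ⊗[k] ↥V, ι (jA w) = j (LinearMap.rTensor ↥V g w) := by
    intro w
    induction w using TensorProduct.induction_on with
    | zero => simp
    | tmul a n =>
      rw [hι, hjA, hj, hg]
      simp
    | add x y hx hy => simp [map_add, hx, hy]
  -- monoid level
  set ιM : (A ⊗[k] R) →* (K ⊗[k] R) := (ι : (A ⊗[k] R) →* (K ⊗[k] R)) with hιM
  set εM : (K ⊗[k] R) →* K := (ε : (K ⊗[k] R) →* K) with hεM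
  set algM : A →* K := ((algebraMap A K : A →+* K) : A →* K) with halgM
  set NA : Subgroup (K ⊗[k] R)ˣ := (Units.map ιM).range with hNA
  set NK : Subgroup Kˣ := (Units.map algM).range with hNK
  set f : (K ⊗[k] R)ˣ →* (Kˣ ⧸ NK) := (QuotientGroup.mk' NK).comp (Units.map εM) with hfdef
  have hfker : ∀ u ∈ NA, f u = 1 := by
    rintro u ⟨v, rfl⟩
    rw [hfdef]
    simp only [MonoidHom.comp_apply, QuotientGroup.mk'_apply]
    rw [QuotientGroup.eq_one_iff]
    refine ⟨Units.map (εA : (A ⊗[k] R) →* A) v, ?_⟩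
    ext
    simp only [Units.coe_map, MonoidHom.coe_coe, halgM, RingHom.coe_coe, hιM, hεM]
    exact (hει ↑v).symm
  have hfker' : NA ≤ f.ker := hfker
  set φ0 := QuotientGroup.lift NA f hfker' with hφ0
  refine ⟨φ0, fun u => rfl, ?_⟩
  -- the quotient target
  set rT : (K ⊗[k] ↥V) →ₗ[k] ((K ⧸ p) ⊗[k] ↥V) := LinearMap.rTensor ↥V p.mkQ with hrT
  have hmkQexact : Function.Exact g p.mkQ := by
    intro y
    rw [Submodule.mkQ_apply, Submodule.Quotient.mk_eq_zero]
    exact ⟨fun h => h, fun h => h⟩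
  have hexactQ := Module.Flat.rTensor_exact (M := ↥V) hmkQexact
  have hrTsurj : Function.Surjective rT :=
    LinearMap.rTensor_surjective ↥V (Submodule.mkQ_surjective p)
  -- the exponential map into the quotient group
  set U : (K ⊗[k] ↥V) → (K ⊗[k] R)ˣ := fun w => uexp k (j w) with hU
  have hUadd : ∀ w w', U (w + w') = U w * U w' := by
    intro w w'
    rw [hU]
    simp only [map_add]
    exact uexp_add k (hjnil w) (hjnil w')
  set mkG : (K ⊗[k] R)ˣ →* ((K ⊗[k] R)ˣ ⧸ NA) := QuotientGroup.mk' NA with hmkG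
  have hεjw : ∀ w, ε (j w) = 0 := fun w => (hkerε (j w)).mpr ⟨w, rfl⟩
  have hεU : ∀ w, Units.map εM (U w) = 1 := by
    intro w
    rw [hU, hεM]
    rw [map_uexp k ε (hjnil w), hεjw w, uexp_zero]
  have hmem : ∀ w, mkG (U w) ∈ φ0.ker := by
    intro w
    rw [MonoidHom.mem_ker, hmkG, hφ0]
    show QuotientGroup.lift NA f hfker' (QuotientGroup.mk' NA (U w)) = 1
    rw [QuotientGroup.mk'_apply, QuotientGroup.lift_mk, hfdef]
    simp only [MonoidHom.comp_apply, QuotientGroup.mk'_apply]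
    rw [hεU w]
    simp
  set Φ2 : (K ⊗[k] ↥V) →+ Additive ↥(φ0.ker) :=
    AddMonoidHom.mk' (fun w => Additive.ofMul (⟨mkG (U w), hmem w⟩ : φ0.ker))
      (by
        intro w w'
        rw [← ofMul_mul]
        refine congrArg Additive.ofMul (Subtype.ext ?_)
        show mkG (U (w + w')) = ↑((⟨mkG (U w), hmem w⟩ : φ0.ker) * ⟨mkG (U w'), hmem w'⟩)
        rw [hUadd, map_mul]
        rfl) with hΦ2
  -- kernel characterization
  have hkerΦ : ∀ w, Φ2 w = 0 ↔ rT w = 0 := by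
    intro w
    rw [hΦ2]
    simp only [AddMonoidHom.mk'_apply]
    rw [show (Additive.ofMul (⟨mkG (U w), hmem w⟩ : φ0.ker) = 0) ↔
        ((⟨mkG (U w), hmem w⟩ : φ0.ker) = 1) from ofMul_eq_zero]
    rw [show ((⟨mkG (U w), hmem w⟩ : φ0.ker) = 1) ↔ (mkG (U w) = 1) from
      ⟨fun h => congrArg Subtype.val h, fun h => Subtype.ext h⟩]
    rw [hmkG, QuotientGroup.mk'_apply, QuotientGroup.eq_one_iff]
    constructor
    · rintro ⟨s, hs⟩
      -- εA s = 1
      have hcoe : ι ↑s = nexp k (j w) := by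
        have h1 := congrArg Units.val hs
        rw [Units.coe_map] at h1
        calc (ι ↑s : K ⊗[k] R) = ιM ↑s := rfl
          _ = ↑(U w) := h1
          _ = nexp k (j w) := uexp_val k (hjnil w)
      haveI := hK
      have hinj : Function.Injective (algebraMap A K) :=
        IsLocalization.injective K (le_refl (nonZeroDivisors A))
      have hεAs : εA ↑s = 1 := by
        apply hinj
        rw [← hει, hcoe, map_nexp k ε (hjnil w), hεjw w, nexp_zero, map_one]
      set tA : A ⊗[k] R := (↑s : A ⊗[k] R) - 1 with htA
      have hεAtA : εA tA = 0 := by rw [htA, map_sub, map_one, hεAs, sub_self]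
      obtain ⟨wA, hwA⟩ := (hkerεA tA).mp hεAtA
      have htAnil : IsNilpotent tA := hwA ▸ hjAnil wA
      obtain ⟨m, hm⟩ := htAnil
      obtain ⟨b, hbmem, hb⟩ := exists_nexp_eq k m tA hm
      have hεAb : εA b = 0 := by
        obtain ⟨d, hd⟩ := Ideal.mem_span_singleton'.mp hbmem
        rw [← hd, map_mul, hεAtA, mul_zero]
      obtain ⟨w'', hw''⟩ := (hkerεA b).mp hεAb
      have hbnil : IsNilpotent b := hw'' ▸ hjAnil w''
      have hιb : ι b = j w := by
        apply nexp_inj k (by rw [← hw'', hιj]; exact hjnil _) (hjnil w)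
        rw [← map_nexp k ι hbnil, hb]
        rw [show (1 : A ⊗[k] R) + tA = ↑s by rw [htA]; ring]
        exact hcoe
      have hweq : w = LinearMap.rTensor ↥V g w'' := by
        apply hjinj
        rw [← hιj, hw'', hιb]
      rw [(hexactQ w)]
      exact ⟨w'', hweq.symm⟩
    · intro h
      have hw : rT w = 0 := h
      obtain ⟨w'', hw''⟩ := (hexactQ w).mp hw
      refine ⟨uexp k (jA w''), ?_⟩
      rw [hιM]
      rw [map_uexp k ι (hjAnil w''), hιj, hw'']
  -- surjectivity of Φ2
  have hsurj : Function.Surjective Φ2 := by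
    intro z
    set c : ↥φ0.ker := Additive.toMul z with hc
    obtain ⟨u, hu⟩ := QuotientGroup.mk'_surjective NA (↑c : (K ⊗[k] R)ˣ ⧸ NA)
    have hcker : φ0 ↑c = 1 := c.2
    have hlift : φ0 ((QuotientGroup.mk' NA) u) = f u := by
      rw [hφ0, QuotientGroup.mk'_apply, QuotientGroup.lift_mk]
    have hφu : f u = 1 := by rw [← hlift, hu]; exact hcker
    rw [hfdef] at hφu
    simp only [MonoidHom.comp_apply, QuotientGroup.mk'_apply] at hφu
    rw [QuotientGroup.eq_one_iff] at hφu
    obtain ⟨v, hv⟩ := hφu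
    set w0 : (A ⊗[k] R)ˣ :=
      Units.map ((Algebra.TensorProduct.includeLeft : A →ₐ[k] A ⊗[k] R) :
        A →* A ⊗[k] R) v with hw0
    set u' : (K ⊗[k] R)ˣ := u * (Units.map ιM w0)⁻¹ with hu'
    have hstep : Units.map εM (Units.map ιM w0) = Units.map algM v := by
      ext
      simp only [Units.coe_map, MonoidHom.coe_coe]
      show ε (ι ((Algebra.TensorProduct.includeLeft : A →ₐ[k] A ⊗[k] R) ↑v)) = algM ↑v
      rw [hει]
      have : εA ((Algebra.TensorProduct.includeLeft : A →ₐ[k] A ⊗[k] R) ↑v) = ↑v := by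
        rw [hεA]
        simp
      rw [this]
      rfl
    have hεu' : Units.map εM u' = 1 := by
      rw [hu', map_mul, map_inv, hstep, hv, mul_inv_cancel]
    have hε1 : ε (↑u' : K ⊗[k] R) = 1 := by
      have := congrArg Units.val hεu'
      rw [Units.coe_map] at this
      exact this
    set t : K ⊗[k] R := (↑u' : K ⊗[k] R) - 1 with ht
    have hεt : ε t = 0 := by rw [ht, map_sub, map_one, hε1, sub_self]
    obtain ⟨wt, hwt⟩ := (hkerε t).mp hεt
    have htnil : IsNilpotent t := hwt ▸ hjnil wt
    obtain ⟨m, hm⟩ := htnil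
    obtain ⟨a, hamem, ha⟩ := exists_nexp_eq k m t hm
    have hεa : ε a = 0 := by
      obtain ⟨d, hd⟩ := Ideal.mem_span_singleton'.mp hamem
      rw [← hd, map_mul, hεt, mul_zero]
    obtain ⟨w, hw⟩ := (hkerε a).mp hεa
    have hUw : U w = u' := by
      ext
      calc ((U w : (K ⊗[k] R)ˣ) : K ⊗[k] R) = nexp k (j w) := uexp_val k (hjnil w)
        _ = nexp k a := by rw [hw]
        _ = 1 + t := ha
        _ = ↑u' := by rw [ht]; ring
    have hmkGu' : mkG u' = ↑c := by
      rw [← hu, hmkG, QuotientGroup.mk'_eq_mk']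
      refine ⟨Units.map ιM w0, ⟨w0, rfl⟩, ?_⟩
      rw [hu']
      exact inv_mul_cancel_right u (Units.map ιM w0)
    refine ⟨w, ?_⟩
    rw [hΦ2]
    simp only [AddMonoidHom.mk'_apply]
    rw [← ofMul_toMul z, ← hc]
    refine congrArg Additive.ofMul (Subtype.ext ?_)
    show mkG (U w) = ↑c
    rw [hUw, hmkGu']
  -- assemble the equivalence
  have hkk : Φ2.ker = (rT.toAddMonoidHom).ker := by
    ext w
    rw [AddMonoidHom.mem_ker, AddMonoidHom.mem_ker]
    exact hkerΦ w
  have E2 := QuotientAddGroup.quotientKerEquivOfSurjective Φ2 hsurj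
  have E3 := QuotientAddGroup.quotientKerEquivOfSurjective rT.toAddMonoidHom hrTsurj
  have E23 : Additive ↥φ0.ker ≃+ ((K ⧸ p) ⊗[k] ↥V) :=
    E2.symm.trans ((QuotientAddGroup.quotientAddEquivOfEq hkk).trans E3)
  have E1 : ↥φ0.ker ≃* Multiplicative (Additive ↥φ0.ker) :=
    { toFun := fun x => Multiplicative.ofAdd (Additive.ofMul x)
      invFun := fun x => Additive.toMul (Multiplicative.toAdd x)
      left_inv := fun _ => rfl
      right_inv := fun _ => rfl
      map_mul' := fun _ _ => rfl }
  exact ⟨E1.trans (AddEquiv.toMultiplicative E23)⟩
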